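/- Let V ⊆ S² be finite, and let {a,b} and {c,d} be two edges of the strict Gabriel graph of V with {a,b} ≠ {c,d}. Then no point of S² lies in the relative interior of both the minor great-circular arc with endpoints a, b and the minor great-circular arc with endpoints c, d; that is, the drawing of the strict Gabriel graph by minor great-circular arcs has no crossings. -/

import Mathlib

open scoped RealInnerProductSpace Classical

noncomputable section

abbrev Euc (d : ℕ) : Type := EuclideanSpace ℝ (Fin d)

/-- `{p, q}` is a double-normal pair of the finite point set `V`. -/
def IsDNPair {d : ℕ} (V : Finset (Euc d)) (p q : Euc d) : Prop :=
  p ∈ V ∧ q ∈ V ∧ p ≠ q ∧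
    ∀ v ∈ V, 0 ≤ ⟪v - p, q - p⟫ ∧ 0 ≤ ⟪v - q, p - q⟫

/-- `N(V)`: the number of (unordered) double-normal pairs of `V`. -/
def numDN {d : ℕ} (V : Finset (Euc d)) : ℕ :=
  ((V ×ˢ V).filter fun pq => IsDNPair V pq.1 pq.2).card / 2

/-- `{p, q}` is a strict double-normal pair of `V`. -/
def IsStrictDNPair {d : ℕ} (V : Finset (Euc d)) (p q : Euc d) : Prop :=
  IsDNPair V p q ∧
    ∀ v ∈ V, v ≠ p → v ≠ q → 0 < ⟪v - p, q - p⟫ ∧ 0 < ⟪v - q, p - q⟫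

/-- `N'(V)`: the number of (unordered) strict double-normal pairs of `V`. -/
def numStrictDN {d : ℕ} (V : Finset (Euc d)) : ℕ :=
  ((V ×ˢ V).filter fun pq => IsStrictDNPair V pq.1 pq.2).card / 2

/-- `{a, b}` is an edge of the weak Gabriel graph of `V ⊆ S²`: `a` and `b` are distinct,
non-antipodal, and no point of `V` lies in the open minor spherical cap with diameter `ab`. -/
def IsWeakGabrielEdge (V : Finset (Euc 3)) (a b : Euc 3) : Prop :=
  a ∈ V ∧ b ∈ V ∧ a ≠ b ∧ b ≠ -a ∧ ∀ v ∈ V, 0 ≤ ⟪v - a, v - b⟫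

/-- The number of edges of the weak Gabriel graph of `V`. -/
def numWeakGabriel (V : Finset (Euc 3)) : ℕ :=
  ((V ×ˢ V).filter fun pq => IsWeakGabrielEdge V pq.1 pq.2).card / 2

/-- `{a, b}` is an edge of the strict Gabriel graph of `V ⊆ S²`: `a` and `b` are distinct,
non-antipodal, and no point of `V \ {a, b}` lies in the closed minor spherical cap with
diameter `ab`. -/
def IsStrictGabrielEdge (V : Finset (Euc 3)) (a b : Euc 3) : Prop :=
  a ∈ V ∧ b ∈ V ∧ a ≠ b ∧ b ≠ -a ∧ ∀ v ∈ V, v ≠ a → v ≠ b → 0 < ⟪v - a, v - b⟫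

/-- The relative interior of the minor great-circular arc with endpoints `a`, `b`. -/
def arcInterior (a b : Euc 3) : Set (Euc 3) :=
  {x | ∃ lam mu : ℝ, 0 < lam ∧ 0 < mu ∧
    x = (‖lam • a + mu • b‖)⁻¹ • (lam • a + mu • b)}

lemma inner_self_one {x : Euc 3} (hx : ‖x‖ = 1) : ⟪x, x⟫ = 1 := by
  rw [real_inner_self_eq_norm_sq, hx]; norm_num

lemma one_add_inner_pos {a b : Euc 3} (ha : ‖a‖ = 1) (hb : ‖b‖ = 1) (hne : b ≠ -a) :
    0 < 1 + ⟪a, b⟫ := by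
  have h : a + b ≠ 0 := fun h => hne (by rw [eq_neg_iff_add_eq_zero, add_comm]; exact h)
  have h2 : 0 < ⟪a + b, a + b⟫ :=
    lt_of_le_of_ne real_inner_self_nonneg (Ne.symm (inner_self_ne_zero.mpr h))
  have h3 : ⟪a + b, a + b⟫ = 2 + 2 * ⟪a, b⟫ := by
    rw [inner_add_left, inner_add_right, inner_add_right, inner_self_one ha,
      inner_self_one hb, real_inner_comm b a]; ring
  linarith

lemma comb_inner {a b : Euc 3} (ha : ‖a‖ = 1) (hb : ‖b‖ = 1) (α β : ℝ) :
    ⟪α • a + β • b, a + b⟫ = (α + β) * (1 + ⟪a, b⟫) := by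
  rw [inner_add_left, real_inner_smul_left, real_inner_smul_left, inner_add_right,
    inner_add_right, inner_self_one ha, inner_self_one hb, real_inner_comm b a]; ring

lemma pt_bound (V : Finset (Euc 3)) (hV : ∀ v ∈ V, ‖v‖ = 1) {a b : Euc 3}
    (hab : IsStrictGabrielEdge V a b) {x : Euc 3} (hx : x ∈ V) :
    ⟪x, a + b⟫ ≤ 1 + ⟪a, b⟫ ∧ (x ≠ a → x ≠ b → ⟪x, a + b⟫ < 1 + ⟪a, b⟫) := by
  obtain ⟨haV, hbV, -, -, hG⟩ := hab
  have ha := hV a haV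
  have hb := hV b hbV
  have hx1 := hV x hx
  by_cases hxa : x = a
  · subst hxa
    refine ⟨?_, fun h _ => absurd rfl h⟩
    rw [inner_add_right, inner_self_one ha]
  by_cases hxb : x = b
  · subst hxb
    refine ⟨?_, fun _ h => absurd rfl h⟩
    rw [inner_add_right, inner_self_one hx1]
    linarith [real_inner_comm x a]
  · have h := hG x hx hxa hxb
    have hexp : ⟪x - a, x - b⟫ = ⟪x, x⟫ - ⟪x, b⟫ - ⟪a, x⟫ + ⟪a, b⟫ := by
      rw [inner_sub_left, inner_sub_right, inner_sub_right]; ring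
    have hcomm : ⟪x, a⟫ = ⟪a, x⟫ := real_inner_comm a x
    have hsplit : ⟪x, a + b⟫ = ⟪x, a⟫ + ⟪x, b⟫ := inner_add_right x a b
    have hxx : ⟪x, x⟫ = 1 := inner_self_one hx1
    constructor
    · linarith
    · intro _ _; linarith

lemma arc_extract {a b : Euc 3} (ha : ‖a‖ = 1) (hb : ‖b‖ = 1) (hne : b ≠ -a)
    {s : Euc 3} (hs : s ∈ arcInterior a b) :
    ∃ α β : ℝ, 0 < α ∧ 0 < β ∧ s = α • a + β • b := by
  obtain ⟨lam, mu, hl, hm, hseq⟩ := hs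
  have hpos := one_add_inner_pos ha hb hne
  have hv : lam • a + mu • b ≠ 0 := by
    intro h0
    have hk : ⟪lam • a + mu • b, a + b⟫ = (lam + mu) * (1 + ⟪a, b⟫) := comb_inner ha hb lam mu
    rw [h0, inner_zero_left] at hk
    nlinarith
  have hn : 0 < ‖lam • a + mu • b‖ := norm_pos_iff.mpr hv
  refine ⟨‖lam • a + mu • b‖⁻¹ * lam, ‖lam • a + mu • b‖⁻¹ * mu, by positivity, by positivity, ?_⟩
  rw [hseq, smul_add, smul_smul, smul_smul]

lemma pair_eq_of_mem {a b c d : Euc 3} (hcd : c ≠ d) (h1 : c = a ∨ c = b)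
    (h2 : d = a ∨ d = b) : ({a, b} : Set (Euc 3)) = {c, d} := by
  rcases h1 with h1 | h1 <;> rcases h2 with h2 | h2 <;> subst h1 <;> subst h2 <;>
    first
      | exact absurd rfl hcd
      | rfl
      | exact Set.pair_comm _ _

lemma key_lt (V : Finset (Euc 3)) (hV : ∀ v ∈ V, ‖v‖ = 1) {a b c d : Euc 3}
    (hab : IsStrictGabrielEdge V a b) (hc : c ∈ V) (hd : d ∈ V)
    (hstrict : (c ≠ a ∧ c ≠ b) ∨ (d ≠ a ∧ d ≠ b)) {γ δ : ℝ} (hγ : 0 < γ) (hδ : 0 < δ) :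
    ⟪γ • c + δ • d, a + b⟫ < (γ + δ) * (1 + ⟪a, b⟫) := by
  have hcB := pt_bound V hV hab hc
  have hdB := pt_bound V hV hab hd
  have hsum : ⟪γ • c + δ • d, a + b⟫ = γ * ⟪c, a + b⟫ + δ * ⟪d, a + b⟫ := by
    rw [inner_add_left, real_inner_smul_left, real_inner_smul_left]
  rcases hstrict with ⟨h1, h2⟩ | ⟨h1, h2⟩
  · have := hcB.2 h1 h2
    nlinarith [hdB.1]
  · have := hdB.2 h1 h2
    nlinarith [hcB.1]

theorem strictGabriel_no_crossing (V : Finset (Euc 3)) (hV : ∀ v ∈ V, ‖v‖ = 1)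
    (a b c d : Euc 3) (hab : IsStrictGabrielEdge V a b) (hcd : IsStrictGabrielEdge V c d)
    (hne : ({a, b} : Set (Euc 3)) ≠ {c, d}) :
    ∀ s : Euc 3, ‖s‖ = 1 → ¬ (s ∈ arcInterior a b ∧ s ∈ arcInterior c d) := by
  rintro s hs ⟨h1, h2⟩
  obtain ⟨haV, hbV, hab_ne, hba, habG⟩ := id hab
  obtain ⟨hcV, hdV, hcd_ne, hdc, hcdG⟩ := id hcd
  have ha := hV a haV
  have hb := hV b hbV
  have hc := hV c hcV
  have hd := hV d hdV
  have htab := one_add_inner_pos ha hb hba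
  have htcd := one_add_inner_pos hc hd hdc
  obtain ⟨α, β, hα, hβ, hsab⟩ := arc_extract ha hb hba h1
  obtain ⟨γ, δ, hγ, hδ, hscd⟩ := arc_extract hc hd hdc h2
  have hcd_not : (c ≠ a ∧ c ≠ b) ∨ (d ≠ a ∧ d ≠ b) := by
    rcases Classical.em (c = a ∨ c = b) with h1 | h1
    · rcases Classical.em (d = a ∨ d = b) with h2 | h2
      · exact absurd (pair_eq_of_mem hcd_ne h1 h2) hne
      · right; push_neg at h2; exact h2
    · left; push_neg at h1; exact h1
  have hab_not : (a ≠ c ∧ a ≠ d) ∨ (b ≠ c ∧ b ≠ d) := by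
    rcases Classical.em (a = c ∨ a = d) with h1 | h1
    · rcases Classical.em (b = c ∨ b = d) with h2 | h2
      · exact absurd (pair_eq_of_mem hab_ne h1 h2).symm hne
      · right; push_neg at h2; exact h2
    · left; push_neg at h1; exact h1
  have e1 : ⟪s, a + b⟫ = (α + β) * (1 + ⟪a, b⟫) := by rw [hsab]; exact comb_inner ha hb α β
  have e2 : ⟪s, c + d⟫ = (γ + δ) * (1 + ⟪c, d⟫) := by rw [hscd]; exact comb_inner hc hd γ δ
  have lt1 : ⟪s, a + b⟫ < (γ + δ) * (1 + ⟪a, b⟫) := by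
    rw [hscd]; exact key_lt V hV hab hcV hdV hcd_not hγ hδ
  have lt2 : ⟪s, c + d⟫ < (α + β) * (1 + ⟪c, d⟫) := by
    rw [hsab]; exact key_lt V hV hcd haV hbV hab_not hα hβ
  rw [e1] at lt1
  rw [e2] at lt2
  have i1 : α + β < γ + δ := (mul_lt_mul_iff_of_pos_right htab).mp lt1
  have i2 : γ + δ < α + β := (mul_lt_mul_iff_of_pos_right htcd).mp lt2
  linarith
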